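/- Let d and K be integers with 1 ≤ d ≤ K. On a probability space, let Y_1,…,Y_K be random variables taking values in {0,1} such that for every subset T ⊆ {1,…,K} with |T| = d, almost surely ∑_{k ∈ T} Y_k ≥ 1. If α ≥ 0 satisfies E[Y_k] ≤ α/d for every k ∈ {1,…,K}, then α ≥ d·(1 − d/K). -/

import Mathlib

open MeasureTheory ProbabilityTheory

/-- lower bound for covering schemes. If `Y_1,…,Y_K ∈ {0,1}` cover
every `d`-subset almost surely and `E[Y_k] ≤ α/d` for all `k`, then
`α ≥ d·(1 − d/K)`. -/
theorem stmt_13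
    {Ω : Type*} [MeasurableSpace Ω] {μ : Measure Ω} [IsProbabilityMeasure μ]
    (d K : ℕ) (hd : 1 ≤ d) (hdK : d ≤ K)
    (Y : Fin K → Ω → ℝ) (hmeas : ∀ k, Measurable (Y k))
    (h01 : ∀ k ω, Y k ω = 0 ∨ Y k ω = 1)
    (hcov : ∀ T : Finset (Fin K), T.card = d → ∀ᵐ ω ∂μ, 1 ≤ ∑ k ∈ T, Y k ω)
    (α : ℝ) (hα : 0 ≤ α)
    (hE : ∀ k, ∫ ω, Y k ω ∂μ ≤ α / d) :
    (d : ℝ) * (1 - (d : ℝ) / (K : ℝ)) ≤ α := by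
  have hK0 : 0 < K := lt_of_lt_of_le hd hdK
  have hd' : (0:ℝ) < d := by exact_mod_cast hd
  have hK' : (0:ℝ) < K := by exact_mod_cast hK0
  have hnn : ∀ k ω, 0 ≤ Y k ω := by
    intro k ω; rcases h01 k ω with h | h <;> simp [h]
  have hall : ∀ᵐ ω ∂μ, ∀ T : Finset (Fin K), T.card = d → 1 ≤ ∑ k ∈ T, Y k ω := by
    rw [MeasureTheory.ae_all_iff]
    intro T
    by_cases hT : T.card = d
    · exact (hcov T hT).mono fun ω h _ => h
    · exact Filter.Eventually.of_forall fun ω h => absurd h hT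
  have hpt : ∀ ω, (∀ T : Finset (Fin K), T.card = d → 1 ≤ ∑ k ∈ T, Y k ω) →
      (K : ℝ) - (d : ℝ) + 1 ≤ ∑ k, Y k ω := by
    intro ω hω
    set S := Finset.univ.filter (fun k => Y k ω = 0) with hS
    have hScard : S.card < d := by
      by_contra h
      push_neg at h
      obtain ⟨T, hTS, hTcard⟩ := Finset.exists_subset_card_eq h
      have h1 := hω T hTcard
      have hz : ∑ k ∈ T, Y k ω = 0 := Finset.sum_eq_zero fun k hk => by
        have := hTS hk
        simpa [hS] using this
      linarith
    have hone : ∀ k ∈ Sᶜ, Y k ω = 1 := by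
      intro k hk
      rcases h01 k ω with h | h
      · exact absurd (by simp [hS, h]) (Finset.mem_compl.mp hk)
      · exact h
    have hsub : ∑ k ∈ Sᶜ, Y k ω ≤ ∑ k, Y k ω :=
      Finset.sum_le_sum_of_subset_of_nonneg (Finset.subset_univ _)
        fun k _ _ => hnn k ω
    have hcompl : ∑ k ∈ Sᶜ, Y k ω = (Sᶜ.card : ℝ) := by
      rw [Finset.sum_congr rfl hone]; simp
    have hcc : Sᶜ.card = K - S.card := by
      simp [Finset.card_compl]
    have hle : S.card ≤ K := (Finset.card_le_card (Finset.subset_univ S)).trans (by simp)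
    have hccR : (Sᶜ.card : ℝ) = (K : ℝ) - (S.card : ℝ) := by
      rw [hcc, Nat.cast_sub hle]
    have hSd : (S.card : ℝ) ≤ (d : ℝ) - 1 := by
      have : (S.card : ℝ) + 1 ≤ (d : ℝ) := by exact_mod_cast hScard
      linarith
    calc (K : ℝ) - (d : ℝ) + 1 ≤ (K : ℝ) - (S.card : ℝ) := by linarith
      _ = ∑ k ∈ Sᶜ, Y k ω := by rw [hcompl, hccR]
      _ ≤ ∑ k, Y k ω := hsub
  have hint : ∀ k, Integrable (Y k) μ := fun k =>
    (integrable_const (1:ℝ)).mono' (hmeas k).aestronglyMeasurable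
      (Filter.Eventually.of_forall fun ω => by
        rcases h01 k ω with h | h <;> simp [h])
  have h1 : (K:ℝ) - d + 1 ≤ ∫ ω, ∑ k, Y k ω ∂μ := by
    have := integral_mono_ae (integrable_const ((K:ℝ) - d + 1))
      (integrable_finset_sum _ fun k _ => hint k)
      (hall.mono fun ω h => hpt ω h)
    simpa using this
  have h2 : ∫ ω, ∑ k, Y k ω ∂μ = ∑ k, ∫ ω, Y k ω ∂μ :=
    integral_finset_sum _ fun k _ => hint k
  have h3 : ∑ k : Fin K, ∫ ω, Y k ω ∂μ ≤ (K : ℝ) * (α / d) := by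
    calc ∑ k : Fin K, ∫ ω, Y k ω ∂μ ≤ ∑ _k : Fin K, α / d :=
          Finset.sum_le_sum fun k _ => hE k
      _ = (K : ℝ) * (α / d) := by simp [Finset.sum_const, mul_comm]
  have key : (K:ℝ) - d + 1 ≤ (K : ℝ) * (α / d) := by
    rw [h2] at h1; linarith
  have key2 : (d : ℝ) * ((K:ℝ) - d + 1) ≤ (K : ℝ) * α := by
    have := mul_le_mul_of_nonneg_left key (le_of_lt hd')
    have heq : (d : ℝ) * ((K : ℝ) * (α / d)) = (K : ℝ) * α := by
      field_simp
    linarith [heq ▸ this]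
  rw [show (d : ℝ) * (1 - (d : ℝ) / (K : ℝ)) = (d : ℝ) * ((K:ℝ) - d) / K by
    field_simp, div_le_iff₀ hK']
  nlinarith
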